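/- For all (u₁, v₁), (u₂, v₂) ∈ ℂ², the squared modulus of the Hermitian inner product satisfies |u₁·conj(u₂) + v₁·conj(v₂)|² = ½·(⟨H(u₁, v₁), H(u₂, v₂)⟩ + ‖H(u₁, v₁)‖·‖H(u₂, v₂)‖), where ⟨·,·⟩ is the standard inner product on ℝ³. -/

import Mathlib

open Complex

noncomputable def hopfMap (u v : ℂ) : EuclideanSpace ℝ (Fin 3) :=
  (WithLp.equiv 2 (Fin 3 → ℝ)).symm
    ![2 * ((starRingEnd ℂ) u * v).re, -2 * ((starRingEnd ℂ) u * v).im,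
      ‖u‖ ^ 2 - ‖v‖ ^ 2]

lemma hopf_norm (u v : ℂ) : ‖hopfMap u v‖ = ‖u‖ ^ 2 + ‖v‖ ^ 2 := by
  have h : ‖hopfMap u v‖ = Real.sqrt (∑ i : Fin 3, hopfMap u v i ^ 2) := by
    rw [EuclideanSpace.norm_eq]; congr 1; apply Finset.sum_congr rfl; intros; rw [Real.norm_eq_abs, _root_.sq_abs]
  rw [h]
  have : (∑ i : Fin 3, hopfMap u v i ^ 2) = (‖u‖ ^ 2 + ‖v‖ ^ 2) ^ 2 := by
    simp [hopfMap, Fin.sum_univ_three, Complex.sq_norm, Complex.normSq_apply, Complex.mul_re,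
      Complex.mul_im]
    ring
  rw [this, Real.sqrt_sq (by positivity)]

lemma hopf_inner (u₁ v₁ u₂ v₂ : ℂ) :
    (inner ℝ (hopfMap u₁ v₁) (hopfMap u₂ v₂) : ℝ) =
      2 * ‖u₁ * (starRingEnd ℂ) u₂ + v₁ * (starRingEnd ℂ) v₂‖ ^ 2
        - (‖u₁‖ ^ 2 + ‖v₁‖ ^ 2) * (‖u₂‖ ^ 2 + ‖v₂‖ ^ 2) := by
  rw [EuclideanSpace.inner_eq_star_dotProduct]
  simp [hopfMap, dotProduct, Fin.sum_univ_three, Complex.sq_norm, Complex.normSq_apply,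
    Complex.mul_re, Complex.mul_im, Complex.add_re, Complex.add_im]
  ring

theorem abs_sq_hermitian_inner_eq (u₁ v₁ u₂ v₂ : ℂ) :
    ‖u₁ * (starRingEnd ℂ) u₂ + v₁ * (starRingEnd ℂ) v₂‖ ^ 2 =
      (1 / 2) * ((inner ℝ (hopfMap u₁ v₁) (hopfMap u₂ v₂) : ℝ)
        + ‖hopfMap u₁ v₁‖ * ‖hopfMap u₂ v₂‖) := by
  rw [hopf_inner, hopf_norm, hopf_norm]; ring
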